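/- Let (Δ_k)_{k≥1} be a sequence of nonnegative real numbers and let C₁, C₂ ≥ 0. Suppose that for every ε > 0, the number of indices k ≥ 1 with Δ_k > ε is finite and at most C₁/ε + C₂/ε². Then: (i) Δ_k → 0 as k → ∞; and (ii) for every positive integer K, Σ_{k=1}^{K} Δ_k ≤ C₁·(1 + log K) + 2·√(C₂·K), where log is the natural logarithm. -/

import Mathlib

open Finset Filter

lemma sum_inv_sqrt_le_aux (K : ℕ) :
    ∑ m ∈ Finset.Icc 1 K, (Real.sqrt m)⁻¹ ≤ 2 * Real.sqrt K := by
  induction K with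
  | zero => simp
  | succ K ih =>
    rw [Finset.sum_Icc_succ_top (by omega)]
    have ha : (0:ℝ) ≤ Real.sqrt K := Real.sqrt_nonneg _
    have hb : (0:ℝ) < Real.sqrt (K+1) := Real.sqrt_pos.2 (by positivity)
    have ha2 : (Real.sqrt K)^2 = K := Real.sq_sqrt (by positivity)
    have hb2 : (Real.sqrt (K+1))^2 = (K:ℝ)+1 := Real.sq_sqrt (by positivity)
    have key : (Real.sqrt ((K:ℕ)+1:ℕ))⁻¹ ≤ 2 * Real.sqrt ((K:ℕ)+1:ℕ) - 2 * Real.sqrt K := by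
      push_cast
      rw [inv_le_iff_one_le_mul₀ hb]
      nlinarith [sq_nonneg (Real.sqrt (K+1) - Real.sqrt K)]
    push_cast at key ⊢
    linarith

lemma harmonic_sum_le_aux (K : ℕ) :
    ∑ m ∈ Finset.Icc 1 K, ((m:ℝ))⁻¹ ≤ 1 + Real.log K := by
  have h1 : ((harmonic K : ℚ) : ℝ) = ∑ m ∈ Finset.Icc 1 K, ((m:ℝ))⁻¹ := by
    rw [harmonic_eq_sum_Icc]; push_cast; ring
  rw [← h1]; exact harmonic_le_one_add_log K

lemma gap_le_bound_aux (C₁ C₂ : ℝ) (hC₁ : 0 ≤ C₁) (hC₂ : 0 ≤ C₂) (n : ℕ) (hn : 1 ≤ n)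
    (d : ℝ)
    (hcount : ∀ ε : ℝ, 0 < ε → ε < d → (n:ℝ) ≤ C₁/ε + C₂/ε^2) :
    d ≤ C₁ / n + Real.sqrt C₂ / Real.sqrt n := by
  have hn0 : (0:ℝ) < n := by exact_mod_cast hn
  have hc0 : (0:ℝ) ≤ C₁ / n := by positivity
  have hs0 : (0:ℝ) ≤ Real.sqrt C₂ / Real.sqrt n := by positivity
  have hs2 : (Real.sqrt C₂ / Real.sqrt n)^2 = C₂ / n := by
    rw [div_pow, Real.sq_sqrt hC₂, Real.sq_sqrt (le_of_lt hn0)]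
  by_contra hcon
  push_neg at hcon
  obtain ⟨ε, hεdef⟩ : ∃ x : ℝ, x = (C₁ / ↑n + Real.sqrt C₂ / Real.sqrt ↑n + d) / 2 := ⟨_, rfl⟩
  have hε0 : 0 < ε := by rw [hεdef]; linarith
  have hεd : ε < d := by rw [hεdef]; linarith
  have hεB : C₁ / ↑n + Real.sqrt C₂ / Real.sqrt ↑n < ε := by rw [hεdef]; linarith
  have hcnt := hcount ε hε0 hεd
  have hkey : (n:ℝ) * ε^2 ≤ C₁ * ε + C₂ := by
    have h2 := mul_le_mul_of_nonneg_right hcnt (le_of_lt (show (0:ℝ) < ε^2 by positivity))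
    have heq : (C₁/ε + C₂/ε^2) * ε^2 = C₁ * ε + C₂ := by field_simp
    linarith [heq ▸ h2]
  have hε2 : ε^2 ≤ (C₁ / ↑n) * ε + (Real.sqrt C₂ / Real.sqrt ↑n)^2 := by
    rw [hs2, div_mul_eq_mul_div, ← add_div, le_div_iff₀ hn0]
    linear_combination hkey
  have p : (0:ℝ) < ε - Real.sqrt C₂ / Real.sqrt ↑n := by linarith
  have q : (0:ℝ) < ε - C₁ / ↑n - Real.sqrt C₂ / Real.sqrt ↑n := by linarith
  nlinarith [mul_pos p q, mul_nonneg hs0 (le_of_lt q), mul_nonneg hc0 hs0]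

/-- rank of index `k` among `1..K`, ties broken by index. -/
noncomputable def pacRnk (Δ : ℕ → ℝ) (K k : ℕ) : ℕ :=
  ((Finset.Icc 1 K).filter (fun j => Δ k < Δ j ∨ (Δ j = Δ k ∧ j ≤ k))).card

/-- number of indices `j ∈ [1,K]` with `Δ j ≥ Δ k`. -/
noncomputable def pacCnt (Δ : ℕ → ℝ) (K k : ℕ) : ℕ :=
  ((Finset.Icc 1 K).filter (fun j => Δ k ≤ Δ j)).card

lemma pacRnk_pos (Δ : ℕ → ℝ) (K k : ℕ) (hk : k ∈ Finset.Icc 1 K) :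
    1 ≤ pacRnk Δ K k :=
  Finset.card_pos.2 ⟨k, Finset.mem_filter.2 ⟨hk, Or.inr ⟨rfl, le_refl k⟩⟩⟩

lemma pacRnk_le (Δ : ℕ → ℝ) (K k : ℕ) : pacRnk Δ K k ≤ K := by
  have := Finset.card_filter_le (Finset.Icc 1 K)
      (fun j => Δ k < Δ j ∨ (Δ j = Δ k ∧ j ≤ k))
  simpa [pacRnk, Nat.card_Icc] using this

lemma pacRnk_le_pacCnt (Δ : ℕ → ℝ) (K k : ℕ) : pacRnk Δ K k ≤ pacCnt Δ K k := by
  apply Finset.card_le_card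
  intro j hj
  rw [Finset.mem_filter] at hj ⊢
  refine ⟨hj.1, ?_⟩
  rcases hj.2 with h | ⟨h, _⟩
  · exact le_of_lt h
  · exact le_of_eq h.symm

lemma pacRnk_lt_of_lt (Δ : ℕ → ℝ) (K k k' : ℕ) (hk' : k' ∈ Finset.Icc 1 K)
    (h : Δ k' < Δ k) : pacRnk Δ K k < pacRnk Δ K k' := by
  apply Finset.card_lt_card
  rw [Finset.ssubset_iff_of_subset]
  · refine ⟨k', Finset.mem_filter.2 ⟨hk', Or.inr ⟨rfl, le_refl k'⟩⟩, ?_⟩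
    rw [Finset.mem_filter]
    rintro ⟨-, hc | ⟨hc, -⟩⟩
    · exact absurd hc (not_lt.2 (le_of_lt h))
    · exact absurd hc (ne_of_lt h)
  · intro j hj
    rw [Finset.mem_filter] at hj ⊢
    refine ⟨hj.1, Or.inl ?_⟩
    rcases hj.2 with hc | ⟨hc, -⟩
    · exact h.trans hc
    · exact hc ▸ h
  
lemma pacRnk_lt_of_eq (Δ : ℕ → ℝ) (K k k' : ℕ) (hk' : k' ∈ Finset.Icc 1 K)
    (heq : Δ k = Δ k') (hlt : k < k') : pacRnk Δ K k < pacRnk Δ K k' := by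
  apply Finset.card_lt_card
  rw [Finset.ssubset_iff_of_subset]
  · refine ⟨k', Finset.mem_filter.2 ⟨hk', Or.inr ⟨rfl, le_refl k'⟩⟩, ?_⟩
    rw [Finset.mem_filter]
    rintro ⟨-, hc | ⟨-, hc⟩⟩
    · exact absurd hc (by rw [heq]; exact lt_irrefl _)
    · omega
  · intro j hj
    rw [Finset.mem_filter] at hj ⊢
    refine ⟨hj.1, ?_⟩
    rcases hj.2 with hc | ⟨hc, hc'⟩
    · exact Or.inl (heq ▸ hc)
    · exact Or.inr ⟨heq ▸ hc, hc'.trans (le_of_lt hlt)⟩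

/-- Deterministic core of "uniform-PAC implies convergence and regret":
if for every `ε > 0` the number of indices `k ≥ 1` with `Δ_k > ε` is finite and
at most `C₁/ε + C₂/ε²`, then `Δ_k → 0` and
`∑_{k=1}^K Δ_k ≤ C₁ (1 + log K) + 2 √(C₂ K)` for all `K ≥ 1`. -/
theorem uniform_pac_implies_convergence_and_regret
    (Δ : ℕ → ℝ) (hΔ : ∀ k, 0 ≤ Δ k)
    (C₁ C₂ : ℝ) (hC₁ : 0 ≤ C₁) (hC₂ : 0 ≤ C₂)
    (h : ∀ ε : ℝ, 0 < ε →
      {k : ℕ | 1 ≤ k ∧ ε < Δ k}.Finite ∧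
      ({k : ℕ | 1 ≤ k ∧ ε < Δ k}.ncard : ℝ) ≤ C₁ / ε + C₂ / ε ^ 2) :
    Tendsto Δ atTop (nhds 0) ∧
    ∀ K : ℕ, 0 < K →
      ∑ k ∈ Finset.Icc 1 K, Δ k ≤ C₁ * (1 + Real.log K) + 2 * Real.sqrt (C₂ * K) := by
  constructor
  · rw [Metric.tendsto_atTop]
    intro ε hε
    obtain ⟨hfin, -⟩ := h (ε/2) (by linarith)
    obtain ⟨N, hN⟩ := hfin.bddAbove
    refine ⟨N + 1, fun n hn => ?_⟩
    have h1 : ¬ (ε/2 < Δ n) := by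
      intro hc
      have := hN ⟨by omega, hc⟩
      omega
    rw [Real.dist_eq, sub_zero, abs_of_nonneg (hΔ n)]
    push_neg at h1
    linarith
  · intro K hK
    -- step 1: each gap is bounded via its count
    have hcntpos : ∀ k ∈ Finset.Icc 1 K, 1 ≤ pacCnt Δ K k := by
      intro k hk
      exact Finset.card_pos.2 ⟨k, Finset.mem_filter.2 ⟨hk, le_refl _⟩⟩
    have hgap : ∀ k ∈ Finset.Icc 1 K,
        Δ k ≤ C₁ / (pacCnt Δ K k) + Real.sqrt C₂ / Real.sqrt (pacCnt Δ K k) := by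
      intro k hk
      apply gap_le_bound_aux C₁ C₂ hC₁ hC₂ _ (hcntpos k hk)
      intro ε hε0 hεd
      obtain ⟨hfin, hcard⟩ := h ε hε0
      refine le_trans ?_ hcard
      have hsub : ↑((Finset.Icc 1 K).filter (fun j => Δ k ≤ Δ j)) ⊆
          {j : ℕ | 1 ≤ j ∧ ε < Δ j} := by
        intro j hj
        simp only [Finset.coe_filter, Set.mem_setOf_eq, Finset.mem_Icc] at hj
        exact ⟨hj.1.1, lt_of_lt_of_le hεd hj.2⟩
      have := Set.ncard_le_ncard hsub hfin
      rw [Set.ncard_coe_finset] at this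
      exact_mod_cast this
    -- step 2: replace count by rank (antitone bound)
    have hrnk : ∀ k ∈ Finset.Icc 1 K,
        Δ k ≤ C₁ / (pacRnk Δ K k) + Real.sqrt C₂ / Real.sqrt (pacRnk Δ K k) := by
      intro k hk
      refine (hgap k hk).trans ?_
      have h1 : (0:ℝ) < pacRnk Δ K k := by exact_mod_cast pacRnk_pos Δ K k hk
      have h2 : (pacRnk Δ K k : ℝ) ≤ pacCnt Δ K k := by
        exact_mod_cast pacRnk_le_pacCnt Δ K k
      have h3 : (0:ℝ) < Real.sqrt (pacRnk Δ K k) := Real.sqrt_pos.2 h1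
      exact add_le_add (div_le_div_of_nonneg_left hC₁ h1 h2)
        (div_le_div_of_nonneg_left (Real.sqrt_nonneg _) h3 (Real.sqrt_le_sqrt h2))
    -- step 3: rank is injective on Icc 1 K
    have hinj : ∀ k ∈ Finset.Icc 1 K, ∀ k' ∈ Finset.Icc 1 K,
        pacRnk Δ K k = pacRnk Δ K k' → k = k' := by
      intro k hk k' hk' he
      by_contra hne
      rcases lt_trichotomy (Δ k) (Δ k') with hlt | heq | hlt
      · exact absurd he (ne_of_gt (pacRnk_lt_of_lt Δ K k' k hk hlt))
      · rcases Nat.lt_or_ge k k' with hlt | hge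
        · exact absurd he (ne_of_lt (pacRnk_lt_of_eq Δ K k k' hk' heq hlt))
        · have : k' < k := by omega
          exact absurd he (ne_of_gt (pacRnk_lt_of_eq Δ K k' k hk heq.symm this))
      · exact absurd he (ne_of_lt (pacRnk_lt_of_lt Δ K k k' hk' hlt))
    have himg : (Finset.Icc 1 K).image (fun k => pacRnk Δ K k) ⊆ Finset.Icc 1 K := by
      intro m hm
      obtain ⟨k, hk, rfl⟩ := Finset.mem_image.1 hm
      exact Finset.mem_Icc.2 ⟨pacRnk_pos Δ K k hk, pacRnk_le Δ K k⟩
    calc ∑ k ∈ Finset.Icc 1 K, Δ k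
        ≤ ∑ k ∈ Finset.Icc 1 K,
            (C₁ / (pacRnk Δ K k) + Real.sqrt C₂ / Real.sqrt (pacRnk Δ K k)) :=
          Finset.sum_le_sum hrnk
      _ = ∑ m ∈ (Finset.Icc 1 K).image (fun k => pacRnk Δ K k),
            (C₁ / (m:ℝ) + Real.sqrt C₂ / Real.sqrt m) := by
          exact (Finset.sum_image (s := Finset.Icc 1 K) (g := fun k => pacRnk Δ K k)
            (f := fun m : ℕ => C₁ / (m:ℝ) + Real.sqrt C₂ / Real.sqrt m) hinj).symm
      _ ≤ ∑ m ∈ Finset.Icc 1 K, (C₁ / (m:ℝ) + Real.sqrt C₂ / Real.sqrt m) := by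
          apply Finset.sum_le_sum_of_subset_of_nonneg himg
          intro m _ _
          positivity
      _ = C₁ * (∑ m ∈ Finset.Icc 1 K, ((m:ℝ))⁻¹)
            + Real.sqrt C₂ * (∑ m ∈ Finset.Icc 1 K, (Real.sqrt m)⁻¹) := by
          rw [Finset.sum_add_distrib, Finset.mul_sum, Finset.mul_sum]
          simp [div_eq_mul_inv]
      _ ≤ C₁ * (1 + Real.log K) + Real.sqrt C₂ * (2 * Real.sqrt K) :=
          add_le_add (mul_le_mul_of_nonneg_left (harmonic_sum_le_aux K) hC₁)
            (mul_le_mul_of_nonneg_left (sum_inv_sqrt_le_aux K) (Real.sqrt_nonneg _))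
      _ = C₁ * (1 + Real.log K) + 2 * Real.sqrt (C₂ * K) := by
          rw [Real.sqrt_mul hC₂]; ring
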